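/- Let (ξ_n)_{n∈ℤ} be a stationary Markov chain and f ∈ L²_0(π). Then ∑_{n≥1} ‖E(S_n|ξ_0)‖²/n² ≤ 4 ∑_{k≥1} ‖E(X_k|ξ_0)‖², where both sides are allowed to be infinite; in particular ∑_{k≥1} ‖E(X_k|ξ_0)‖² < ∞ implies ∑_{n≥1} ‖E(S_n|ξ_0)‖²/n² < ∞. -/

import Mathlib

open MeasureTheory ProbabilityTheory Filter
open scoped ENNReal NNReal Topology

noncomputable section

/-- The σ-algebra generated by the random variables `ξ k`, `k ∈ I`. -/
def sigmaOf {Ω S : Type*} [MeasurableSpace S] (ξ : ℤ → Ω → S) (I : Set ℤ) :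
    MeasurableSpace Ω :=
  ⨆ k ∈ I, MeasurableSpace.comap (ξ k) inferInstance

/-- The σ-algebra generated by the pair `(ξ i, ξ j)`. -/
def pairSigma {Ω S : Type*} [MeasurableSpace S] (ξ : ℤ → Ω → S) (i j : ℤ) :
    MeasurableSpace Ω :=
  MeasurableSpace.comap (ξ i) inferInstance ⊔ MeasurableSpace.comap (ξ j) inferInstance

/-- Conditional independence of the σ-algebras `m₁` and `m₂` given `m'`. -/
def CondIndepGiven {Ω : Type*} [MeasurableSpace Ω] (μ : Measure Ω)
    (m' m₁ m₂ : MeasurableSpace Ω) : Prop :=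
  ∀ A B : Set Ω, MeasurableSet[m₁] A → MeasurableSet[m₂] B →
    μ[(A ∩ B).indicator (fun _ => (1 : ℝ)) | m'] =ᵐ[μ]
      fun ω => (μ[A.indicator (fun _ => (1 : ℝ)) | m']) ω *
        (μ[B.indicator (fun _ => (1 : ℝ)) | m']) ω

/-- Markov property: for every `n`, the past `σ(ξ k, k ≤ n)` and the future
`σ(ξ k, k ≥ n)` are conditionally independent given `σ(ξ n)`. -/
def IsMarkovChain {Ω S : Type*} [MeasurableSpace Ω] [MeasurableSpace S]
    (μ : Measure Ω) (ξ : ℤ → Ω → S) : Prop :=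
  ∀ n : ℤ, CondIndepGiven μ (MeasurableSpace.comap (ξ n) inferInstance)
    (sigmaOf ξ {k | k ≤ n}) (sigmaOf ξ {k | n ≤ k})

/-- Stationarity: `(ξ (n+1))_n` has the same law as `(ξ n)_n`. -/
def IsStationaryZ {Ω S : Type*} [MeasurableSpace Ω] [MeasurableSpace S]
    (μ : Measure Ω) (ξ : ℤ → Ω → S) : Prop :=
  Measure.map (fun ω (n : ℤ) => ξ (n + 1) ω) μ = Measure.map (fun ω (n : ℤ) => ξ n ω) μ

/-- The left shift on path space `S^ℤ`. -/
def shiftZ {S : Type*} (x : ℤ → S) : ℤ → S := fun n => x (n + 1)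

/-- Total ergodicity: every iterate of the shift is ergodic for the law of the chain. -/
def TotallyErgodic {Ω S : Type*} [MeasurableSpace Ω] [MeasurableSpace S]
    (μ : Measure Ω) (ξ : ℤ → Ω → S) : Prop :=
  ∀ k : ℕ, 0 < k → Ergodic (shiftZ^[k]) (Measure.map (fun ω (n : ℤ) => ξ n ω) μ)

/-- Partial sums `S_n = f(ξ 1) + ⋯ + f(ξ n)`. -/
def pS {Ω S : Type*} (ξ : ℤ → Ω → S) (f : S → ℝ) (n : ℕ) (ω : Ω) : ℝ :=
  ∑ i ∈ Finset.Icc 1 n, f (ξ (i : ℤ) ω)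

/-- Convergence in distribution (weak convergence of the laws) of real random
variables to the measure `ν`. -/
def TendstoInDistribution {Ω : Type*} [MeasurableSpace Ω] (μ : Measure Ω)
    (Y : ℕ → Ω → ℝ) (ν : Measure ℝ) : Prop :=
  ∀ g : BoundedContinuousFunction ℝ ℝ,
    Tendsto (fun n => ∫ ω, g (Y n ω) ∂μ) atTop (𝓝 (∫ x, g x ∂ν))

open Finset ENNReal

lemma hardy_key (a : ℕ → ℝ) (N : ℕ) :
    ∑ n ∈ range (N + 1),
      (((∑ k ∈ range (n+1), a k) / (n+1))^2 - 2 * a n * ((∑ k ∈ range (n+1), a k) / (n+1)))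
      ≤ -((N : ℝ)+1) * ((∑ k ∈ range (N+1), a k) / (N+1))^2 := by
  induction N with
  | zero => simp; nlinarith [sq_nonneg (a 0)]
  | succ N ih =>
    rw [Finset.sum_range_succ, show N+1+1 = N+2 from rfl]
    push_cast
    rw [show ((N:ℝ)+1+1) = (N:ℝ)+2 from by ring]
    set b1 := (∑ k ∈ range (N+1), a k) / ((N:ℝ)+1) with hb1
    set b2 := (∑ k ∈ range (N+2), a k) / ((N:ℝ)+2) with hb2
    have hsum : a (N+1) = ((N:ℝ)+2) * b2 - ((N:ℝ)+1) * b1 := by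
      rw [hb1, hb2, Finset.sum_range_succ]
      field_simp
      ring
    have hkey : 0 ≤ ((N:ℝ)+1) * (b1 - b2)^2 := by positivity
    have hsum2 : a (N+1) * b2 = (((N:ℝ)+2) * b2 - ((N:ℝ)+1) * b1) * b2 := by rw [hsum]
    nlinarith [ih, hkey, hsum2]

lemma hardy_fin (a : ℕ → ℝ) (ha : ∀ n, 0 ≤ a n) (N : ℕ) :
    ∑ n ∈ range N, ((∑ k ∈ range (n+1), a k) / (n+1))^2 ≤ 4 * ∑ n ∈ range N, (a n)^2 := by
  rcases Nat.eq_zero_or_pos N with h | h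
  · subst h; simp
  obtain ⟨M, rfl⟩ : ∃ M, N = M + 1 := ⟨N-1, (Nat.succ_pred_eq_of_pos h).symm⟩
  set b : ℕ → ℝ := fun n => (∑ k ∈ range (n+1), a k) / (n+1) with hbdef
  have hbnn : ∀ n, 0 ≤ b n := fun n => div_nonneg (Finset.sum_nonneg fun k _ => ha k) (by positivity)
  set Sa := ∑ n ∈ range (M+1), (a n)^2 with hSadef
  set Sb := ∑ n ∈ range (M+1), (b n)^2 with hSbdef
  set T := ∑ n ∈ range (M+1), a n * b n with hTdef
  have h1 : Sb ≤ 2 * T := by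
    have hkey := hardy_key a M
    have hneg : -(((M : ℕ) : ℝ)+1) * (b M)^2 ≤ 0 := by
      have h2 : (0:ℝ) ≤ (b M)^2 := sq_nonneg _
      nlinarith
    have hsplit : ∑ n ∈ range (M+1), ((b n)^2 - 2 * a n * b n) = Sb - 2 * T := by
      rw [Finset.sum_sub_distrib, hTdef, Finset.mul_sum]
      simp_rw [mul_assoc]
      rfl
    have : ∑ n ∈ range (M+1), ((b n)^2 - 2 * a n * b n) ≤ 0 := hkey.trans hneg
    linarith [hsplit ▸ this]
  have h2 : T^2 ≤ Sa * Sb := Finset.sum_mul_sq_le_sq_mul_sq (range (M+1)) a b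
  have hT : 0 ≤ T := Finset.sum_nonneg fun n _ => mul_nonneg (ha n) (hbnn n)
  have hSb : 0 ≤ Sb := Finset.sum_nonneg fun n _ => sq_nonneg _
  have hSa : 0 ≤ Sa := Finset.sum_nonneg fun n _ => sq_nonneg _
  show Sb ≤ 4 * Sa
  nlinarith [mul_le_mul h1 h1 hSb (by linarith : (0:ℝ) ≤ 2*T), h2, hSa, hSb]

lemma hardy_ennreal (a : ℕ → ℝ≥0∞) :
    ∑' n : ℕ, (∑ k ∈ range (n+1), a k)^2 / ((n:ℝ≥0∞)+1)^2 ≤ 4 * ∑' n : ℕ, (a n)^2 := by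
  by_cases htop : ∑' n : ℕ, (a n)^2 = ⊤
  · rw [htop]
    simp
  have hfin : ∀ n, a n ≠ ⊤ := by
    intro n hn
    have h1 : (a n)^2 = ⊤ := by rw [hn]; simp
    exact htop (top_le_iff.1 (h1 ▸ ENNReal.le_tsum n))
  set A : ℕ → ℝ := fun n => (a n).toReal with hA
  have hAnn : ∀ n, 0 ≤ A n := fun n => ENNReal.toReal_nonneg
  have haA : ∀ n, a n = ENNReal.ofReal (A n) := fun n => (ENNReal.ofReal_toReal (hfin n)).symm
  have hden : ∀ n : ℕ, ((n:ℝ≥0∞)+1) = ENNReal.ofReal ((n:ℝ)+1) := by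
    intro n
    rw [ENNReal.ofReal_add (by positivity) zero_le_one, ENNReal.ofReal_natCast, ENNReal.ofReal_one]
  have hterm : ∀ n : ℕ, (∑ k ∈ range (n+1), a k)^2 / ((n:ℝ≥0∞)+1)^2
      = ENNReal.ofReal (((∑ k ∈ range (n+1), A k) / ((n:ℝ)+1))^2) := by
    intro n
    rw [div_pow, ENNReal.ofReal_div_of_pos (by positivity),
      ENNReal.ofReal_pow (by positivity : (0:ℝ) ≤ ∑ k ∈ range (n+1), A k),
      ENNReal.ofReal_pow (by positivity : (0:ℝ) ≤ (n:ℝ)+1),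
      ENNReal.ofReal_sum_of_nonneg (fun k _ => hAnn k), ← hden]
    congr 2
    exact Finset.sum_congr rfl fun k _ => haA k
  simp_rw [hterm]
  rw [ENNReal.tsum_eq_iSup_nat]
  refine iSup_le fun N => ?_
  rw [← ENNReal.ofReal_sum_of_nonneg (fun n _ => by positivity)]
  have hsum : ∑ n ∈ range N, (A n)^2 ≤ (∑' n : ℕ, (a n)^2).toReal := by
    have h1 : ∑ n ∈ range N, (A n)^2 = (∑ n ∈ range N, (a n)^2).toReal := by
      rw [ENNReal.toReal_sum (fun n _ => by simp [pow_eq_top_iff, hfin n])]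
      exact Finset.sum_congr rfl fun n _ => by simp [hA, ENNReal.toReal_pow]
    rw [h1]
    exact ENNReal.toReal_mono htop (ENNReal.sum_le_tsum _)
  calc ENNReal.ofReal (∑ n ∈ range N, ((∑ k ∈ range (n+1), A k) / ((n:ℝ)+1))^2)
      ≤ ENNReal.ofReal (4 * (∑' n : ℕ, (a n)^2).toReal) := by
        apply ENNReal.ofReal_le_ofReal
        linarith [hardy_fin A hAnn N, hsum]
    _ = 4 * ∑' n : ℕ, (a n)^2 := by
        rw [ENNReal.ofReal_mul (by norm_num), ENNReal.ofReal_toReal htop]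
        norm_num

open MeasureTheory ProbabilityTheory Filter Finset
open scoped ENNReal NNReal Topology


theorem stmt18 {Ω S : Type*} [MeasurableSpace Ω] [MeasurableSpace S]
    (μ : Measure Ω) [IsProbabilityMeasure μ] (ξ : ℤ → Ω → S)
    (hmeas : ∀ n, Measurable (ξ n))
    (hstat : IsStationaryZ μ ξ) (hmarkov : IsMarkovChain μ ξ)
    (f : S → ℝ) (hf : Measurable f)
    (hmean : ∫ ω, f (ξ 0 ω) ∂μ = 0)
    (hL2 : MemLp (fun ω => f (ξ 0 ω)) 2 μ) :
    ∑' n : ℕ, (eLpNorm (μ[pS ξ f (n + 1) |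
        MeasurableSpace.comap (ξ 0) inferInstance]) 2 μ) ^ 2 / ((n : ℝ≥0∞) + 1) ^ 2 ≤
      4 * ∑' k : ℕ, (eLpNorm (μ[fun ω => f (ξ ((k : ℤ) + 1) ω) |
        MeasurableSpace.comap (ξ 0) inferInstance]) 2 μ) ^ 2 := by
  have hm0 : MeasurableSpace.comap (ξ 0) inferInstance ≤ (inferInstance : MeasurableSpace Ω) :=
    (hmeas 0).comap_le
  -- one-step stationarity of marginals
  have step : ∀ n : ℤ, Measure.map (ξ (n+1)) μ = Measure.map (ξ n) μ := by
    intro n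
    have h1 := congrArg (fun ν => Measure.map (fun x : ℤ → S => x n) ν) hstat
    rwa [Measure.map_map (measurable_pi_apply n)
        (measurable_pi_lambda _ fun m => hmeas (m+1)),
      Measure.map_map (measurable_pi_apply n)
        (measurable_pi_lambda _ fun m => hmeas m)] at h1
  have hmap : ∀ k : ℕ, Measure.map (ξ (k:ℤ)) μ = Measure.map (ξ 0) μ := by
    intro k
    induction k with
    | zero => norm_num
    | succ k ih => rw [show ((k+1 : ℕ):ℤ) = (k:ℤ)+1 from by push_cast; ring, step, ih]
  -- L² membership at all nonnegative times
  have hmem : ∀ k : ℕ, MemLp (fun ω => f (ξ (k:ℤ) ω)) 2 μ := by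
    intro k
    have h0 : MemLp f 2 (Measure.map (ξ 0) μ) :=
      (memLp_map_measure_iff hf.aestronglyMeasurable (hmeas 0).aemeasurable).mpr hL2
    have hk : MemLp f 2 (Measure.map (ξ (k:ℤ)) μ) := by rw [hmap k]; exact h0
    exact (memLp_map_measure_iff hf.aestronglyMeasurable (hmeas _).aemeasurable).mp hk
  have hint : ∀ k : ℕ, Integrable (fun ω => f (ξ (k:ℤ) ω)) μ :=
    fun k => (hmem k).integrable one_le_two
  set a : ℕ → ℝ≥0∞ := fun k =>
    eLpNorm (μ[fun ω => f (ξ ((k : ℤ) + 1) ω) | MeasurableSpace.comap (ξ 0) inferInstance]) 2 μ with ha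
  have hbound : ∀ n : ℕ,
      eLpNorm (μ[pS ξ f (n + 1) | MeasurableSpace.comap (ξ 0) inferInstance]) 2 μ ≤ ∑ k ∈ range (n+1), a k := by
    intro n
    have hps : pS ξ f (n+1) = ∑ i ∈ Finset.Icc 1 (n+1), (fun ω => f (ξ (i:ℤ) ω)) := by
      funext ω; simp [pS]
    have h1 : μ[pS ξ f (n+1) | MeasurableSpace.comap (ξ 0) inferInstance] =ᵐ[μ]
        ∑ i ∈ Finset.Icc 1 (n+1), μ[(fun ω => f (ξ (i:ℤ) ω)) | MeasurableSpace.comap (ξ 0) inferInstance] := by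
      rw [hps]
      exact condExp_finset_sum (fun i _ => hint i) _
    rw [eLpNorm_congr_ae h1]
    refine le_trans (eLpNorm_sum_le (fun i _ =>
      (stronglyMeasurable_condExp.mono hm0).aestronglyMeasurable) one_le_two) ?_
    rw [← Finset.Ico_add_one_right_eq_Icc, Finset.sum_Ico_eq_sum_range]
    simp only [Nat.succ_sub_one, Nat.add_sub_cancel]
    apply le_of_eq
    refine Finset.sum_congr rfl fun k _ => ?_
    rw [ha]
    congr 2
    push_cast
    ring
  calc ∑' n : ℕ, (eLpNorm (μ[pS ξ f (n + 1) | MeasurableSpace.comap (ξ 0) inferInstance]) 2 μ) ^ 2 / ((n : ℝ≥0∞) + 1) ^ 2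
      ≤ ∑' n : ℕ, (∑ k ∈ range (n+1), a k)^2 / ((n : ℝ≥0∞) + 1) ^ 2 := by
        refine ENNReal.tsum_le_tsum fun n => ?_
        gcongr
        exact hbound n
    _ ≤ 4 * ∑' k : ℕ, (a k)^2 := hardy_ennreal a


end
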